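/- Fix a positive integer N, a positive integer n, and functions f_1, ..., f_n from the positive integers to ℂ. Then ∑_{σ ∈ S_n} z_N(f_{σ(1)}, f_{σ(2)}, ..., f_{σ(n)}) = ∑_{𝒫 ⊢ {1,...,n}} (−1)^{n − |𝒫|} ∏_{P ∈ 𝒫} (|P| − 1)! z_N(∑_{j ∈ P} f_j), where S_n is the group of permutations of {1, ..., n}, the sum on the right is over all unordered set partitions 𝒫 of {1, ..., n}, |𝒫| is the number of parts of 𝒫, and ∑_{j ∈ P} f_j is the pointwise sum. -/

import Mathlib

open Finset

/-- `zN N (f₁,…,fₙ) = ∑_{N > k₁ > k₂ > ⋯ > kₙ > 0} ∏ⱼ exp (fⱼ kⱼ)`, a finite nested sum. -/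
noncomputable def zN (N : ℕ) {n : ℕ} (f : Fin n → ℕ+ → ℂ) : ℂ :=
  ∑ k ∈ Finset.univ.filter (fun k : Fin n → Fin N =>
      (∀ i j : Fin n, i < j → (k j : ℕ) < (k i : ℕ)) ∧ ∀ i, 0 < (k i : ℕ)),
    ∏ j, Complex.exp (if h : 0 < (k j : ℕ) then f j ⟨(k j : ℕ), h⟩ else 0)

namespace HoffmanAux

/-- The basic weight. -/
noncomputable def ee {n N : ℕ} (f : Fin n → ℕ+ → ℂ) (j : Fin n) (m : Fin N) : ℂ :=
  Complex.exp (if h : 0 < (m : ℕ) then f j ⟨(m : ℕ), h⟩ else 0)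

lemma ite_mul_ite {p q : Prop} [Decidable p] [Decidable q] (x y : ℂ) :
    (if p then x else 0) * (if q then y else 0) = if p ∧ q then x * y else 0 := by
  by_cases hp : p <;> by_cases hq : q <;> simp [hp, hq]

/-! ### The LHS as a sum over injective tuples -/

lemma perm_decreasing_unique {n N : ℕ} {t : Fin n → Fin N} (ht : Function.Injective t)
    {π σ : Equiv.Perm (Fin n)}
    (hπ : ∀ i j : Fin n, i < j → (t (π j) : ℕ) < (t (π i) : ℕ))
    (hσ : ∀ i j : Fin n, i < j → (t (σ j) : ℕ) < (t (σ i) : ℕ)) : π = σ := by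
  have mono : ∀ τ : Equiv.Perm (Fin n),
      (∀ i j : Fin n, i < j → (t (τ j) : ℕ) < (t (τ i) : ℕ)) →
      Monotone (t ∘ ⇑(Fin.revPerm.trans τ)) := by
    intro τ hτ i j hij
    rcases eq_or_lt_of_le hij with rfl | hlt
    · exact le_rfl
    · have h1 : (j : Fin n).rev < (i : Fin n).rev := Fin.rev_lt_rev.2 hlt
      have h2 := hτ _ _ h1
      simp only [Function.comp_apply, Equiv.trans_apply, Fin.revPerm_apply]
      exact le_of_lt (by exact_mod_cast h2)
  have h1 := Tuple.unique_monotone (mono π hπ) (mono σ hσ)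
  ext j
  have h2 := congrFun h1 j.rev
  simp only [Function.comp_apply, Equiv.trans_apply, Fin.revPerm_apply, Fin.rev_rev] at h2
  exact congrArg Fin.val (ht h2)

lemma lhs_eq (N n : ℕ) (f : Fin n → ℕ+ → ℂ) :
    ∑ σ : Equiv.Perm (Fin n), zN N (fun k => f (σ k)) =
      ∑ t ∈ univ.filter (fun t : Fin n → Fin N =>
          Function.Injective t ∧ ∀ i, 0 < (t i : ℕ)), ∏ j, ee f j (t j) := by
  classical
  have dec_inj : ∀ k : Fin n → Fin N,
      (∀ i j : Fin n, i < j → (k j : ℕ) < (k i : ℕ)) → Function.Injective k := by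
    intro k hk i j hij
    by_contra hne
    rcases lt_or_gt_of_ne hne with h | h
    · exact absurd (congrArg (fun x : Fin N => (x : ℕ)) hij) (ne_of_gt (hk i j h))
    · exact absurd (congrArg (fun x : Fin N => (x : ℕ)) hij) (ne_of_lt (hk j i h))
  have sort_dec : ∀ t : Fin n → Fin N, Function.Injective t →
      ∀ i j : Fin n, i < j →
        ((t ∘ ⇑(Fin.revPerm.trans (Tuple.sort t))) j : ℕ) <
          ((t ∘ ⇑(Fin.revPerm.trans (Tuple.sort t))) i : ℕ) := by
    intro t htinj i j hij
    have hmono : Monotone (t ∘ ⇑(Tuple.sort t)) := Tuple.monotone_sort t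
    have hsm : StrictMono (t ∘ ⇑(Tuple.sort t)) :=
      hmono.strictMono_of_injective (htinj.comp (Tuple.sort t).injective)
    have h1 : (t ∘ ⇑(Tuple.sort t)) ((j : Fin n).rev) < (t ∘ ⇑(Tuple.sort t)) ((i : Fin n).rev) :=
      hsm (Fin.rev_lt_rev.2 hij)
    simp only [Function.comp_apply, Equiv.trans_apply, Fin.revPerm_apply] at h1 ⊢
    exact h1
  unfold zN
  have step1 : ∀ σ : Equiv.Perm (Fin n), ∀ k : Fin n → Fin N,
      (∏ j, Complex.exp (if h : 0 < (k j : ℕ) then f (σ j) ⟨(k j : ℕ), h⟩ else 0)) =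
        ∏ i, ee f i ((k ∘ ⇑σ.symm) i) := by
    intro σ k
    rw [← Equiv.prod_comp σ (fun i => ee f i ((k ∘ ⇑σ.symm) i))]
    refine Finset.prod_congr rfl fun j _ => ?_
    simp [ee, Equiv.symm_apply_apply]
  simp only [step1]
  rw [← Finset.sum_product']
  refine Finset.sum_nbij' (fun p => p.2 ∘ ⇑p.1.symm)
    (fun t => (Fin.revPerm.trans (Tuple.sort t), t ∘ ⇑(Fin.revPerm.trans (Tuple.sort t))))
    ?_ ?_ ?_ ?_ ?_
  · rintro ⟨σ, k⟩ hp
    simp only [Finset.mem_product, Finset.mem_filter, Finset.mem_univ, true_and] at hp ⊢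
    exact ⟨(dec_inj k hp.1).comp σ.symm.injective, fun i => hp.2 _⟩
  · intro t ht
    simp only [Finset.mem_filter, Finset.mem_univ, true_and] at ht
    obtain ⟨htinj, htpos⟩ := ht
    simp only [Finset.mem_product, Finset.mem_filter, Finset.mem_univ, true_and]
    exact ⟨sort_dec t htinj, fun i => htpos _⟩
  · rintro ⟨σ, k⟩ hp
    simp only [Finset.mem_product, Finset.mem_filter, Finset.mem_univ, true_and] at hp
    have hkt : Function.Injective (k ∘ ⇑σ.symm) := (dec_inj k hp.1).comp σ.symm.injective
    have hστ : Fin.revPerm.trans (Tuple.sort (k ∘ ⇑σ.symm)) = σ := by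
      refine perm_decreasing_unique hkt (sort_dec _ hkt) ?_
      intro i j hij
      simpa [Equiv.symm_apply_apply] using hp.1 i j hij
    refine Prod.ext hστ ?_
    show (k ∘ ⇑σ.symm) ∘ ⇑(Fin.revPerm.trans (Tuple.sort (k ∘ ⇑σ.symm))) = k
    rw [hστ]
    funext x
    simp [Equiv.symm_apply_apply]
  · intro t ht
    funext x
    show t ((Fin.revPerm.trans (Tuple.sort t)) ((Fin.revPerm.trans (Tuple.sort t)).symm x)) = t x
    rw [Equiv.apply_symm_apply]
  · rintro ⟨σ, k⟩ _
    rfl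

/-! ### `zN` of a single function -/

lemma zN_one (N : ℕ) (g : ℕ+ → ℂ) :
    zN N ![g] = ∑ m ∈ univ.filter (fun m : Fin N => 0 < (m : ℕ)),
      Complex.exp (if h : 0 < (m : ℕ) then g ⟨(m : ℕ), h⟩ else 0) := by
  classical
  unfold zN
  refine Finset.sum_nbij' (fun k => k 0) (fun m => fun _ => m) ?_ ?_ ?_ ?_ ?_
  · intro k hk
    simp only [Finset.mem_filter, Finset.mem_univ, true_and] at hk ⊢
    exact hk.2 0
  · intro m hm
    simp only [Finset.mem_filter, Finset.mem_univ, true_and] at hm ⊢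
    refine ⟨fun i j hij => ?_, fun _ => hm⟩
    exact absurd (Subsingleton.elim i j) (ne_of_lt hij)
  · intro k _
    funext i
    exact congrArg k (Subsingleton.elim 0 i)
  · intro m _
    rfl
  · intro k _
    rw [Fin.prod_univ_one]
    rfl


lemma avoid_parts_of_mem {α : Type*} [DecidableEq α] {s : Finset α} (P : Finpartition s)
    {b : Finset α} (hb : b ∈ P.parts) : (P.avoid b).parts = P.parts.erase b := by
  ext c
  rw [Finpartition.mem_avoid, mem_erase]
  constructor
  · rintro ⟨d, hd, hdb, rfl⟩
    have hne : d ≠ b := fun h => hdb (h ▸ le_refl _)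
    have hdis : Disjoint d b := P.disjoint hd hb hne
    rw [hdis.sdiff_eq_left]
    exact ⟨hne, hd⟩
  · rintro ⟨hcb, hc⟩
    have hdis : Disjoint c b := P.disjoint hc hb hcb
    refine ⟨c, hc, fun h => P.bot_notMem ?_, hdis.sdiff_eq_left⟩
    rw [← hdis.eq_bot_of_le h]; exact hc

lemma ite_mul_ite' {p q : Prop} [Decidable p] [Decidable q] (x y : ℂ) :
    (if p then x else 0) * (if q then y else 0) = if p ∧ q then x * y else 0 := by
  by_cases hp : p <;> by_cases hq : q <;> simp [hp, hq]

open scoped Classical in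
lemma key_partition {α β : Type*} [DecidableEq α] (k : α → β) (s : Finset α) :
    ∑ P : Finpartition s,
      (if ∀ Q ∈ P.parts, ∀ i ∈ Q, ∀ j ∈ Q, k i = k j then
        (-1 : ℂ) ^ (s.card - P.parts.card) * ∏ Q ∈ P.parts, ((Q.card - 1).factorial : ℂ)
      else 0) = if Set.InjOn k ↑s then 1 else 0 := by
  induction s using Finset.strongInduction with
  | _ s ih =>
  rcases eq_or_ne s ∅ with rfl | hsne
  · haveI : Unique (Finpartition (∅ : Finset α)) :=
      inferInstanceAs (Unique (Finpartition (⊥ : Finset α)))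
    rw [Fintype.sum_unique]
    have hparts : (default : Finpartition (∅ : Finset α)).parts = ∅ :=
      Finpartition.parts_eq_empty_iff.2 rfl
    simp [hparts]
  obtain ⟨a, ha⟩ := Finset.nonempty_iff_ne_empty.2 hsne
  set F : Finset α := s.filter (fun x => k x = k a) with hF
  have haF : a ∈ F := by simp [hF, ha]
  have hFs : F ⊆ s := filter_subset _ _
  have hmap : ∀ P : Finpartition s, P.part a ∈ s.powerset.filter (fun Q => a ∈ Q) := by
    intro P
    simp only [mem_filter, mem_powerset]
    exact ⟨P.le (P.part_mem.2 ha), P.mem_part ha⟩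
  rw [← Finset.sum_fiberwise_of_maps_to (fun P _ => hmap P)]
  have inner : ∀ Q ∈ s.powerset.filter (fun Q => a ∈ Q),
      (∑ P ∈ univ.filter (fun P : Finpartition s => P.part a = Q),
        (if ∀ R ∈ P.parts, ∀ i ∈ R, ∀ j ∈ R, k i = k j then
          (-1 : ℂ) ^ (s.card - P.parts.card) * ∏ R ∈ P.parts, ((R.card - 1).factorial : ℂ)
        else 0)) =
      (if (∀ i ∈ Q, ∀ j ∈ Q, k i = k j) ∧ Set.InjOn k ↑(s \ Q) then
        (-1 : ℂ) ^ (Q.card - 1) * ((Q.card - 1).factorial : ℂ) else 0) := by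
    intro Q hQ
    rw [mem_filter, mem_powerset] at hQ
    obtain ⟨hQs, haQ⟩ := hQ
    have hQne : Q ≠ ⊥ := by
      intro h; rw [h] at haQ; exact absurd haQ (notMem_empty a)
    have hdisj : Disjoint (s \ Q) Q := sdiff_disjoint
    have hsup : (s \ Q) ⊔ Q = s := sdiff_sup_cancel hQs
    have hQcard : 1 ≤ Q.card := card_pos.2 ⟨a, haQ⟩
    have hcards : (s \ Q).card + Q.card = s.card := card_sdiff_add_card_eq_card hQs
    have hQnotinR : ∀ R : Finpartition (s \ Q), Q ∉ R.parts := by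
      intro R h
      have h2 : a ∈ s \ Q := R.le h haQ
      simp [haQ] at h2
    have hbij :
        (∑ P ∈ univ.filter (fun P : Finpartition s => P.part a = Q),
          (if ∀ R ∈ P.parts, ∀ i ∈ R, ∀ j ∈ R, k i = k j then
            (-1 : ℂ) ^ (s.card - P.parts.card) * ∏ R ∈ P.parts, ((R.card - 1).factorial : ℂ)
          else 0)) =
        ∑ R : Finpartition (s \ Q),
          (if ∀ B ∈ insert Q R.parts, ∀ i ∈ B, ∀ j ∈ B, k i = k j then
            (-1 : ℂ) ^ (s.card - (insert Q R.parts).card) *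
              ∏ B ∈ insert Q R.parts, ((B.card - 1).factorial : ℂ)
          else 0) := by
      refine Finset.sum_nbij' (fun P => P.avoid Q) (fun R => R.extend hQne hdisj hsup)
        (fun P _ => mem_univ _) ?_ ?_ ?_ ?_
      · intro R _
        simp only [mem_filter, mem_univ, true_and]
        exact Finpartition.part_eq_of_mem _
          (by rw [Finpartition.extend_parts]; exact mem_insert_self _ _) haQ
      · intro P hP
        rw [mem_filter] at hP
        have hmem : Q ∈ P.parts := hP.2 ▸ P.part_mem.2 ha
        apply Finpartition.ext
        rw [Finpartition.extend_parts, avoid_parts_of_mem P hmem, insert_erase hmem]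
      · intro R _
        apply Finpartition.ext
        rw [avoid_parts_of_mem _ (by rw [Finpartition.extend_parts]; exact mem_insert_self _ _),
          Finpartition.extend_parts, erase_insert (hQnotinR R)]
      · intro P hP
        rw [mem_filter] at hP
        have hmem : Q ∈ P.parts := hP.2 ▸ P.part_mem.2 ha
        rw [avoid_parts_of_mem P hmem, insert_erase hmem]
    rw [hbij]
    have heval : ∀ R : Finpartition (s \ Q),
        (if ∀ B ∈ insert Q R.parts, ∀ i ∈ B, ∀ j ∈ B, k i = k j then
            (-1 : ℂ) ^ (s.card - (insert Q R.parts).card) *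
              ∏ B ∈ insert Q R.parts, ((B.card - 1).factorial : ℂ)
          else 0) =
        (if (∀ i ∈ Q, ∀ j ∈ Q, k i = k j) then
            (-1 : ℂ) ^ (Q.card - 1) * ((Q.card - 1).factorial : ℂ) else 0) *
        (if (∀ B ∈ R.parts, ∀ i ∈ B, ∀ j ∈ B, k i = k j) then
            (-1 : ℂ) ^ ((s \ Q).card - R.parts.card) *
              ∏ B ∈ R.parts, ((B.card - 1).factorial : ℂ) else 0) := by
      intro R
      rw [ite_mul_ite', card_insert_of_notMem (hQnotinR R), prod_insert (hQnotinR R),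
        ]
      have hc : s.card - (R.parts.card + 1) = (Q.card - 1) + ((s \ Q).card - R.parts.card) := by
        have := R.card_parts_le_card
        omega
      rw [hc, pow_add]
      exact if_congr (forall_mem_insert _ _ _) (by ring) rfl
    rw [Finset.sum_congr rfl (fun R _ => heval R), ← Finset.mul_sum,
      ih (s \ Q) (sdiff_ssubset hQs ⟨a, haQ⟩), ite_mul_ite']
    split_ifs with h
    · rw [mul_one]
    · rfl
  rw [Finset.sum_congr rfl inner]
  by_cases hgood : Set.InjOn k ↑(s \ F)
  case neg =>
    rw [Finset.sum_eq_zero, eq_comm, if_neg]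
    · intro hinj
      exact hgood (hinj.mono (Finset.coe_subset.2 (sdiff_subset)))
    · intro Q hQ
      rw [mem_filter, mem_powerset] at hQ
      rw [if_neg]
      rintro ⟨hconst, hinj⟩
      apply hgood
      have hQF : Q ⊆ F := fun x hx => mem_filter.2 ⟨hQ.1 hx, hconst x hx a hQ.2⟩
      exact hinj.mono (Finset.coe_subset.2 (sdiff_subset_sdiff (Finset.Subset.refl s) hQF))
  case pos =>
    have hiff : ∀ Q, Q ⊆ s → a ∈ Q →
        (((∀ i ∈ Q, ∀ j ∈ Q, k i = k j) ∧ Set.InjOn k ↑(s \ Q)) ↔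
          (Q ⊆ F ∧ (F \ Q).card ≤ 1)) := by
      intro Q hQs haQ
      constructor
      · rintro ⟨hconst, hinj⟩
        have hQF : Q ⊆ F := fun x hx => mem_filter.2 ⟨hQs hx, hconst x hx a haQ⟩
        refine ⟨hQF, card_le_one.2 fun x hx y hy => ?_⟩
        rw [mem_sdiff] at hx hy
        have hx1 := mem_filter.1 hx.1
        have hy1 := mem_filter.1 hy.1
        refine hinj ?_ ?_ (hx1.2.trans hy1.2.symm)
        · simp only [coe_sdiff, Set.mem_diff, Finset.mem_coe]
          exact ⟨hx1.1, hx.2⟩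
        · simp only [coe_sdiff, Set.mem_diff, Finset.mem_coe]
          exact ⟨hy1.1, hy.2⟩
      · rintro ⟨hQF, hcard⟩
        constructor
        · intro i hi j hj
          exact (mem_filter.1 (hQF hi)).2.trans ((mem_filter.1 (hQF hj)).2).symm
        · intro x hx y hy hxy
          simp only [coe_sdiff, Set.mem_diff, Finset.mem_coe] at hx hy
          by_cases hxa : k x = k a
          · have hya : k y = k a := hxy.symm.trans hxa
            have hxF : x ∈ F \ Q := mem_sdiff.2 ⟨mem_filter.2 ⟨hx.1, hxa⟩, hx.2⟩
            have hyF : y ∈ F \ Q := mem_sdiff.2 ⟨mem_filter.2 ⟨hy.1, hya⟩, hy.2⟩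
            exact card_le_one.1 hcard x hxF y hyF
          · have hya : ¬ k y = k a := fun h => hxa (hxy.trans h)
            refine hgood ?_ ?_ hxy
            · simp only [coe_sdiff, Set.mem_diff, Finset.mem_coe, hF, mem_filter]
              exact ⟨hx.1, fun h => hxa h.2⟩
            · simp only [coe_sdiff, Set.mem_diff, Finset.mem_coe, hF, mem_filter]
              exact ⟨hy.1, fun h => hya h.2⟩
    have hterm : ∀ Q ∈ s.powerset.filter (fun Q => a ∈ Q),
        (if (∀ i ∈ Q, ∀ j ∈ Q, k i = k j) ∧ Set.InjOn k ↑(s \ Q) then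
          (-1 : ℂ) ^ (Q.card - 1) * ((Q.card - 1).factorial : ℂ) else 0) =
        (if Q ⊆ F ∧ (F \ Q).card ≤ 1 then
          (-1 : ℂ) ^ (Q.card - 1) * ((Q.card - 1).factorial : ℂ) else 0) := by
      intro Q hQ
      rw [mem_filter, mem_powerset] at hQ
      rw [if_congr (hiff Q hQ.1 hQ.2) rfl rfl]
    rw [Finset.sum_congr rfl hterm]
    have hXsub : insert F ((F.erase a).image (fun x => F.erase x)) ⊆
        s.powerset.filter (fun Q => a ∈ Q) := by
      intro Q hQ
      rw [mem_insert, mem_image] at hQ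
      rw [mem_filter, mem_powerset]
      rcases hQ with rfl | ⟨x, hx, rfl⟩
      · exact ⟨hFs, haF⟩
      · rw [mem_erase] at hx
        exact ⟨(erase_subset _ _).trans hFs, mem_erase.2 ⟨Ne.symm hx.1, haF⟩⟩
    have hvanish : ∀ Q ∈ s.powerset.filter (fun Q => a ∈ Q),
        Q ∉ insert F ((F.erase a).image (fun x => F.erase x)) →
        (if Q ⊆ F ∧ (F \ Q).card ≤ 1 then
          (-1 : ℂ) ^ (Q.card - 1) * ((Q.card - 1).factorial : ℂ) else 0) = 0 := by
      intro Q hQ hQX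
      rw [mem_filter, mem_powerset] at hQ
      rw [if_neg]
      rintro ⟨hQF, hcard⟩
      apply hQX
      rw [mem_insert, mem_image]
      rcases Nat.le_one_iff_eq_zero_or_eq_one.1 hcard with h0 | h1
      · left
        have hemp : F \ Q = ∅ := card_eq_zero.1 h0
        have hsub : F ⊆ Q := by
          intro x hx
          by_contra hxQ
          exact absurd (mem_sdiff.2 ⟨hx, hxQ⟩) (by simp [hemp])
        exact Finset.Subset.antisymm hQF hsub
      · right
        obtain ⟨x, hxeq⟩ := card_eq_one.1 h1
        have hxF : x ∈ F ∧ x ∉ Q := mem_sdiff.1 (hxeq ▸ mem_singleton_self x)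
        refine ⟨x, mem_erase.2 ⟨fun h => hxF.2 (by subst h; exact hQ.2), hxF.1⟩, ?_⟩
        ext y
        rw [mem_erase]
        constructor
        · rintro ⟨hyx, hyF⟩
          by_contra hyQ
          have hmem : y ∈ F \ Q := mem_sdiff.2 ⟨hyF, hyQ⟩
          rw [hxeq, mem_singleton] at hmem
          exact hyx hmem
        · intro hy
          exact ⟨fun h => hxF.2 (h ▸ hy), hQF hy⟩
    rw [← Finset.sum_subset hXsub hvanish]
    have hFnot : F ∉ (F.erase a).image (fun x => F.erase x) := by
      rw [mem_image]
      rintro ⟨x, hx, hxe⟩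
      rw [mem_erase] at hx
      have hmem : x ∈ F.erase x := by rw [hxe]; exact hx.2
      exact (notMem_erase x F) hmem
    rw [Finset.sum_insert hFnot]
    rw [Finset.sum_image (fun x hx y hy hxy => by
      by_contra hne
      rw [Finset.mem_coe, mem_erase] at hx hy
      have h1 : x ∈ F.erase y := mem_erase.2 ⟨hne, hx.2⟩
      rw [← hxy] at h1
      exact (notMem_erase x F) h1)]
    have hx_term : ∀ x ∈ F.erase a,
        (if F.erase x ⊆ F ∧ (F \ F.erase x).card ≤ 1 then
          (-1 : ℂ) ^ ((F.erase x).card - 1) * (((F.erase x).card - 1).factorial : ℂ) else 0)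
        = (-1 : ℂ) ^ (F.card - 2) * ((F.card - 2).factorial : ℂ) := by
      intro x hx
      rw [mem_erase] at hx
      rw [if_pos ⟨erase_subset _ _, by rw [sdiff_erase_self hx.2]; simp⟩,
        card_erase_of_mem hx.2]
      rw [Nat.sub_sub]
    rw [Finset.sum_congr rfl hx_term, Finset.sum_const, card_erase_of_mem haF]
    have hselfterm : (if F ⊆ F ∧ (F \ F).card ≤ 1 then
        (-1 : ℂ) ^ (F.card - 1) * ((F.card - 1).factorial : ℂ) else 0) =
        (-1 : ℂ) ^ (F.card - 1) * ((F.card - 1).factorial : ℂ) := by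
      rw [if_pos ⟨Finset.Subset.refl F, by simp⟩]
    rw [hselfterm]
    have hm1 : 1 ≤ F.card := card_pos.2 ⟨a, haF⟩
    rcases eq_or_lt_of_le hm1 with hm | hm
    · -- F.card = 1
      have hFa : F = {a} := by
        obtain ⟨b, hb⟩ := card_eq_one.1 hm.symm
        rw [hb]
        rw [hb, mem_singleton] at haF
        rw [haF]
      rw [← hm]
      simp only [Nat.sub_self, pow_zero, Nat.factorial_zero, Nat.cast_one, mul_one, zero_smul,
        add_zero]
      rw [if_pos]
      intro x hx y hy hxy
      simp only [Finset.mem_coe] at hx hy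
      by_cases hxa : k x = k a
      · have hya : k y = k a := hxy.symm.trans hxa
        have hx' : x ∈ F := mem_filter.2 ⟨hx, hxa⟩
        have hy' : y ∈ F := mem_filter.2 ⟨hy, hya⟩
        rw [hFa, mem_singleton] at hx' hy'
        rw [hx', hy']
      · have hya : ¬ k y = k a := fun h => hxa (hxy.trans h)
        refine hgood ?_ ?_ hxy
        · simp only [coe_sdiff, Set.mem_diff, Finset.mem_coe, hF, mem_filter]
          exact ⟨hx, fun h => hxa h.2⟩
        · simp only [coe_sdiff, Set.mem_diff, Finset.mem_coe, hF, mem_filter]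
          exact ⟨hy, fun h => hya h.2⟩
    · -- 2 ≤ F.card
      rw [if_neg]
      · obtain ⟨p, hp⟩ : ∃ p, F.card = p + 2 := ⟨F.card - 2, by omega⟩
        rw [hp]
        have h1 : p + 2 - 1 = p + 1 := by omega
        have h2 : p + 2 - 2 = p := by omega
        rw [h1, h2, Nat.factorial_succ, nsmul_eq_mul]
        push_cast
        ring
      · intro hinj
        have hne : (F.erase a).Nonempty := by
          rw [← card_pos, card_erase_of_mem haF]
          omega
        obtain ⟨x, hx⟩ := hne
        rw [mem_erase] at hx
        have hxa : k x = k a := (mem_filter.1 hx.2).2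
        exact hx.1 (hinj (Finset.mem_coe.2 (hFs hx.2)) (Finset.mem_coe.2 ha) hxa)

lemma rhs_part (N n : ℕ) (f : Fin n → ℕ+ → ℂ) (P : Finpartition (univ : Finset (Fin n))) :
    ∏ Q ∈ P.parts, (((Q.card - 1).factorial : ℂ) * zN N ![fun x => ∑ j ∈ Q, f j x]) =
      (∏ Q ∈ P.parts, ((Q.card - 1).factorial : ℂ)) *
        ∑ k ∈ univ.filter (fun k : Fin n → Fin N =>
            (∀ i, 0 < (k i : ℕ)) ∧ ∀ Q ∈ P.parts, ∀ i ∈ Q, ∀ j ∈ Q, k i = k j),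
          ∏ j, ee f j (k j) := by
  classical
  rw [Finset.prod_mul_distrib]
  congr 1
  -- rewrite each zN as a sum of products
  have hz : ∀ Q ∈ P.parts, zN N ![fun x => ∑ j ∈ Q, f j x] =
      ∑ m ∈ univ.filter (fun m : Fin N => 0 < (m : ℕ)), ∏ j ∈ Q, ee f j m := by
    intro Q _
    rw [zN_one]
    refine Finset.sum_congr rfl fun m hm => ?_
    rw [mem_filter] at hm
    rw [dif_pos hm.2, Complex.exp_sum]
    refine Finset.prod_congr rfl fun j _ => ?_
    rw [ee, dif_pos hm.2]
  rw [Finset.prod_congr rfl hz, Finset.prod_sum]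
  -- bijection between pi-functions and constant-on-parts tuples
  have dcongr : ∀ (g : (Q : Finset (Fin n)) → Q ∈ P.parts → Fin N)
      {Q₁ Q₂ : Finset (Fin n)} (h : Q₁ = Q₂) (p₁ : Q₁ ∈ P.parts) (p₂ : Q₂ ∈ P.parts),
      g Q₁ p₁ = g Q₂ p₂ := by
    intro g Q₁ Q₂ h p₁ p₂
    subst h
    rfl
  refine Finset.sum_bij'
    (fun g _ => fun j : Fin n => g (P.part j) (P.part_mem.2 (mem_univ j)))
    (fun k _ => fun Q hQ => k (P.nonempty_of_mem_parts hQ).choose)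
    ?_ ?_ ?_ ?_ ?_
  · intro g hg
    rw [Finset.mem_pi] at hg
    rw [mem_filter]
    refine ⟨mem_univ _, fun i => ?_, fun Q hQ i hi j hj => ?_⟩
    · have := hg (P.part i) (P.part_mem.2 (mem_univ i))
      rw [mem_filter] at this
      exact this.2
    · exact (dcongr g (P.part_eq_of_mem hQ hi) (P.part_mem.2 (mem_univ i)) hQ).trans
        (dcongr g (P.part_eq_of_mem hQ hj) (P.part_mem.2 (mem_univ j)) hQ).symm
  · intro k hk
    rw [mem_filter] at hk
    rw [Finset.mem_pi]
    intro Q hQ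
    rw [mem_filter]
    exact ⟨mem_univ _, hk.2.1 _⟩
  · intro g hg
    funext Q hQ
    exact dcongr g (P.part_eq_of_mem hQ (P.nonempty_of_mem_parts hQ).choose_spec) _ _
  · intro k hk
    rw [mem_filter] at hk
    funext j
    have hQ := P.part_mem.2 (mem_univ j)
    exact hk.2.2 (P.part j) hQ _ (P.nonempty_of_mem_parts hQ).choose_spec j (P.mem_part (mem_univ j))
  · intro g hg
    calc ∏ x ∈ P.parts.attach, ∏ j ∈ (x : Finset (Fin n)), ee f j (g x x.2)
        = ∏ x ∈ P.parts.attach, ∏ j ∈ (x : Finset (Fin n)),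
            ee f j (g (P.part j) (P.part_mem.2 (mem_univ j))) := by
          refine Finset.prod_congr rfl fun x _ => Finset.prod_congr rfl fun j hj =>
            congrArg _ (dcongr g (P.part_eq_of_mem x.2 hj).symm _ _)
      _ = ∏ Q ∈ P.parts, ∏ j ∈ Q, ee f j (g (P.part j) (P.part_mem.2 (mem_univ j))) :=
          Finset.prod_attach P.parts
            (fun Q => ∏ j ∈ Q, ee f j (g (P.part j) (P.part_mem.2 (mem_univ j))))
      _ = ∏ j ∈ P.parts.biUnion id, ee f j (g (P.part j) (P.part_mem.2 (mem_univ j))) :=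
          (Finset.prod_biUnion P.disjoint).symm
      _ = ∏ j : Fin n, ee f j (g (P.part j) (P.part_mem.2 (mem_univ j))) := by
          rw [P.biUnion_parts]

end HoffmanAux


/-- Hoffman's partition identity for the finite stuffle-compatible sums `zN`. -/
theorem stmt17 (N : ℕ) (hN : 0 < N) (n : ℕ) (hn : 0 < n) (f : Fin n → ℕ+ → ℂ) :
    ∑ σ : Equiv.Perm (Fin n), zN N (fun k => f (σ k)) =
      ∑ P : Finpartition (Finset.univ : Finset (Fin n)),
        (-1 : ℂ) ^ (n - P.parts.card) *
          ∏ Q ∈ P.parts, ((Q.card - 1).factorial : ℂ) * zN N ![fun x => ∑ j ∈ Q, f j x] := by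
  classical
  rw [HoffmanAux.lhs_eq]
  have h1 : ∀ P : Finpartition (Finset.univ : Finset (Fin n)),
      (-1 : ℂ) ^ (n - P.parts.card) *
          ∏ Q ∈ P.parts, ((Q.card - 1).factorial : ℂ) * zN N ![fun x => ∑ j ∈ Q, f j x] =
      ∑ k ∈ univ.filter (fun k : Fin n → Fin N => ∀ i, 0 < (k i : ℕ)),
        (if ∀ Q ∈ P.parts, ∀ i ∈ Q, ∀ j ∈ Q, k i = k j then
          (-1 : ℂ) ^ (n - P.parts.card) * ∏ Q ∈ P.parts, ((Q.card - 1).factorial : ℂ)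
        else 0) * ∏ j, HoffmanAux.ee f j (k j) := by
    intro P
    rw [HoffmanAux.rhs_part, Finset.sum_filter, Finset.sum_filter, ← mul_assoc, Finset.mul_sum]
    refine Finset.sum_congr rfl fun k _ => ?_
    by_cases hp : ∀ i, 0 < (k i : ℕ) <;>
      by_cases hc : ∀ Q ∈ P.parts, ∀ i ∈ Q, ∀ j ∈ Q, k i = k j <;>
      simp [hp, hc, mul_assoc]
  rw [Finset.sum_congr rfl fun P _ => h1 P, Finset.sum_comm]
  have h2 : ∀ k : Fin n → Fin N,
      (∑ P : Finpartition (Finset.univ : Finset (Fin n)),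
        (if ∀ Q ∈ P.parts, ∀ i ∈ Q, ∀ j ∈ Q, k i = k j then
          (-1 : ℂ) ^ (n - P.parts.card) * ∏ Q ∈ P.parts, ((Q.card - 1).factorial : ℂ)
        else 0) * ∏ j, HoffmanAux.ee f j (k j))
      = (if Function.Injective k then 1 else 0) * ∏ j, HoffmanAux.ee f j (k j) := by
    intro k
    rw [← Finset.sum_mul]
    congr 1
    have hkey := HoffmanAux.key_partition k (univ : Finset (Fin n))
    have hcard : (univ : Finset (Fin n)).card = n := by simp
    have hinj_iff : Set.InjOn k ↑(univ : Finset (Fin n)) ↔ Function.Injective k := by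
      rw [coe_univ]
      exact Set.injOn_univ
    refine Eq.trans (Finset.sum_congr rfl fun P _ => ?_) (Eq.trans hkey ?_)
    · by_cases h : ∀ Q ∈ P.parts, ∀ i ∈ Q, ∀ j ∈ Q, k i = k j
      · simp only [if_pos h, hcard]
      · simp only [if_neg h]
    · by_cases h : Function.Injective k
      · simp only [if_pos h, if_pos (hinj_iff.2 h)]
      · simp only [if_neg h, if_neg (fun hh => h (hinj_iff.1 hh))]
  rw [Finset.sum_congr rfl fun k _ => h2 k, Finset.sum_filter, Finset.sum_filter]
  refine Finset.sum_congr rfl fun k _ => ?_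
  by_cases hi : Function.Injective k <;> by_cases hp : ∀ i, 0 < (k i : ℕ) <;> simp [hi, hp]
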